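/- With the two-bridge setup over ℂ[u], assume in addition q ≠ ±1, and let k be the unique odd integer with 0 < k < p and kq ≡ ±1 (mod 2p). Set V = G₁^{ε₁} G₂^{ε₂} ⋯ G₁^{ε_{k−2}} G₂^{ε_{k−1}} and Y = G₁^{ε_k} G₂^{ε_{k+1}} ⋯ G₁^{ε_{p−2}} G₂^{ε_{p−1}}, so that W = V·Y. Then there exist s ∈ {1, −1} and a polynomial h ∈ ℂ[u] of degree ≤ (p−1)/2 − 2 such that (Y₂₁ − (d − d⁻¹)Y₂₂)·φ_V = s·d^{−ε_k}·φ_W + h. -/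

import Mathlib

open Matrix Polynomial

/-- `ε_i = (−1)^⌊iq/p⌋`. -/
def eps (p : ℕ) (q : ℤ) (i : ℕ) : ℤ :=
  if ((i : ℤ) * q).fdiv p % 2 = 0 then 1 else -1

/-- `G₁ = [[d, 1], [0, d⁻¹]]` over `ℂ[u]`. -/
noncomputable def G1 (d : ℂ) : Matrix (Fin 2) (Fin 2) (Polynomial ℂ) :=
  !![C d, 1; 0, C d⁻¹]

/-- `G₂ = [[d, 0], [−u, d⁻¹]]` over `ℂ[u]`. -/
noncomputable def G2 (d : ℂ) : Matrix (Fin 2) (Fin 2) (Polynomial ℂ) :=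
  !![C d, 0; -X, C d⁻¹]

/-- The `i`-th letter `G₁^{ε_i}` (for odd `i`) or `G₂^{ε_i}` (for even `i`). -/
noncomputable def letter (p : ℕ) (q : ℤ) (d : ℂ) (i : ℕ) :
    Matrix (Fin 2) (Fin 2) (Polynomial ℂ) :=
  (if i % 2 = 1 then G1 d else G2 d) ^ eps p q i

/-- `W = G₁^{ε₁}·G₂^{ε₂}·⋯·G₁^{ε_{p−2}}·G₂^{ε_{p−1}}`. -/
noncomputable def twoBridgeW (p : ℕ) (q : ℤ) (d : ℂ) :
    Matrix (Fin 2) (Fin 2) (Polynomial ℂ) :=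
  ((List.range (p - 1)).map (fun i => letter p q d (i + 1))).prod

/-- `V = G₁^{ε₁}·G₂^{ε₂}·⋯·G₁^{ε_{k−2}}·G₂^{ε_{k−1}}`. -/
noncomputable def twoBridgeV (p : ℕ) (q : ℤ) (d : ℂ) (k : ℕ) :
    Matrix (Fin 2) (Fin 2) (Polynomial ℂ) :=
  ((List.range (k - 1)).map (fun i => letter p q d (i + 1))).prod

/-- `Y = G₁^{ε_k}·G₂^{ε_{k+1}}·⋯·G₁^{ε_{p−2}}·G₂^{ε_{p−1}}`. -/
noncomputable def twoBridgeY (p : ℕ) (q : ℤ) (d : ℂ) (k : ℕ) :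
    Matrix (Fin 2) (Fin 2) (Polynomial ℂ) :=
  ((List.range (p - k)).map (fun i => letter p q d (i + k))).prod

/-- `φ_Z = Z₁₁ − (d − d⁻¹)Z₁₂`. -/
noncomputable def phi (d : ℂ) (Z : Matrix (Fin 2) (Fin 2) (Polynomial ℂ)) :
    Polynomial ℂ :=
  Z 0 0 - C (d - d⁻¹) * Z 0 1


namespace TwoBridgeAux

noncomputable def Am (d : ℂ) (e : ℤ) : Matrix (Fin 2) (Fin 2) (Polynomial ℂ) :=
  !![C (d ^ e), C ((e : ℂ)); 0, C ((d ^ e)⁻¹)]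

noncomputable def Bm (d : ℂ) (e : ℤ) : Matrix (Fin 2) (Fin 2) (Polynomial ℂ) :=
  !![C (d ^ e), 0; -(C ((e : ℂ)) * X), C ((d ^ e)⁻¹)]

noncomputable def Pm (d : ℂ) (e f : ℤ) : Matrix (Fin 2) (Fin 2) (Polynomial ℂ) :=
  !![C (d ^ e * d ^ f) - C ((e : ℂ) * (f : ℂ)) * X, C ((e : ℂ) * (d ^ f)⁻¹);
     -(C ((f : ℂ) * (d ^ e)⁻¹) * X), C ((d ^ e)⁻¹ * (d ^ f)⁻¹)]

lemma eps_cases (p : ℕ) (q : ℤ) (i : ℕ) : eps p q i = 1 ∨ eps p q i = -1 := by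
  unfold eps; split <;> simp

lemma Am_Bm (d : ℂ) (e f : ℤ) : Am d e * Bm d f = Pm d e f := by
  rw [Am, Bm, Pm, Matrix.mul_fin_two]
  ext i j : 2
  fin_cases i <;> fin_cases j <;>
    simp only [C_mul, Matrix.of_apply, Matrix.cons_val', Matrix.cons_val_zero,
      Matrix.cons_val_one, Matrix.head_cons, Matrix.empty_val', Matrix.cons_val_fin_one,
      Matrix.head_fin_const] <;> ring

lemma letter_odd (p : ℕ) (q : ℤ) (d : ℂ) (hd : d ≠ 0) (i : ℕ) (hi : i % 2 = 1) :
    letter p q d i = Am d (eps p q i) := by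
  rcases eps_cases p q i with h | h <;> rw [letter, if_pos hi, h]
  · simp [Am, G1]
  · rw [Matrix.zpow_neg_one]
    refine Matrix.inv_eq_right_inv ?_
    set_option maxRecDepth 10000 in
    ext i j : 2
    fin_cases i <;> fin_cases j <;>
      simp [G1, Am, Matrix.mul_apply, Fin.sum_univ_two, Matrix.one_apply, ← C_mul,
        mul_inv_cancel₀ hd, inv_mul_cancel₀ hd, inv_inv, _root_.zpow_neg, zpow_one]

lemma letter_even (p : ℕ) (q : ℤ) (d : ℂ) (hd : d ≠ 0) (i : ℕ) (hi : ¬ (i % 2 = 1)) :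
    letter p q d i = Bm d (eps p q i) := by
  rcases eps_cases p q i with h | h <;> rw [letter, if_neg hi, h]
  · simp [Bm, G2]
  · rw [Matrix.zpow_neg_one]
    refine Matrix.inv_eq_right_inv ?_
    set_option maxRecDepth 10000 in
    ext i j : 2
    fin_cases i <;> fin_cases j <;>
      simp [G2, Bm, Matrix.mul_apply, Fin.sum_univ_two, Matrix.one_apply, ← C_mul,
        mul_inv_cancel₀ hd, inv_mul_cancel₀ hd, inv_inv, _root_.zpow_neg, zpow_one]

lemma pairEq (p : ℕ) (q : ℤ) (d : ℂ) (hd : d ≠ 0) (i : ℕ) (hi : i % 2 = 1) :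
    letter p q d i * letter p q d (i + 1) = Pm d (eps p q i) (eps p q (i + 1)) := by
  rw [letter_odd p q d hd i hi, letter_even p q d hd (i+1) (by omega), Am_Bm]

noncomputable def pairsP (p : ℕ) (q : ℤ) (d : ℂ) (a m : ℕ) :
    Matrix (Fin 2) (Fin 2) (Polynomial ℂ) :=
  ((List.range m).map (fun j => Pm d (eps p q (a + 2*j)) (eps p q (a + 2*j + 1)))).prod

noncomputable def Ec (p : ℕ) (q : ℤ) (i : ℕ) : ℂ := ((eps p q i : ℤ) : ℂ)

noncomputable def Tprod (p : ℕ) (q : ℤ) (a m : ℕ) : ℂ :=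
  ∏ j ∈ Finset.range m, (-(Ec p q (a + 2*j) * Ec p q (a + 2*j + 1)))

lemma pairsP_succ (p : ℕ) (q : ℤ) (d : ℂ) (a m : ℕ) :
    pairsP p q d a (m+1) = pairsP p q d a m * Pm d (eps p q (a + 2*m)) (eps p q (a + 2*m + 1)) := by
  unfold pairsP
  rw [List.range_succ, List.map_append, List.prod_append]
  simp

lemma Tprod_succ (p : ℕ) (q : ℤ) (a m : ℕ) :
    Tprod p q a (m+1) = Tprod p q a m * (-(Ec p q (a + 2*m) * Ec p q (a + 2*m + 1))) := by
  unfold Tprod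
  rw [Finset.prod_range_succ]

lemma deg_le_step {f g : Polynomial ℂ} {n : ℕ} (a s u : ℂ)
    (hf : f.degree ≤ n) (hg : g.degree < n) :
    (f * (C a - C s * X) + g * (-(C u * X))).degree ≤ ((n + 1 : ℕ) : WithBot ℕ) := by
  have hlin : (C a - C s * X).degree ≤ 1 := by
    have : C a - C s * X = C (-s) * X + C a := by rw [map_neg]; ring
    rw [this]; exact degree_linear_le
  have hux : (-(C u * X)).degree ≤ 1 := by
    rw [degree_neg]
    refine (degree_mul_le _ _).trans ?_
    have h := add_le_add (degree_C_le : (C u : Polynomial ℂ).degree ≤ 0)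
      (degree_X_le : (X : Polynomial ℂ).degree ≤ 1)
    simpa using h
  refine (degree_add_le _ _).trans (max_le ?_ ?_)
  · refine (degree_mul_le _ _).trans ?_
    refine (add_le_add hf hlin).trans ?_
    rw [← Nat.cast_add_one]
  · refine (degree_mul_le _ _).trans ?_
    refine (add_le_add hg.le hux).trans ?_
    rw [← Nat.cast_add_one]

lemma coeff_step {f g : Polynomial ℂ} {n : ℕ} (a s u : ℂ)
    (hf : f.degree ≤ n) (hg : g.degree < n) :
    (f * (C a - C s * X) + g * (-(C u * X))).coeff (n + 1) = -(s * f.coeff n) := by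
  have h1 : f.coeff (n+1) = 0 :=
    coeff_eq_zero_of_degree_lt (lt_of_le_of_lt hf (by exact_mod_cast Nat.lt_succ_self n))
  have h2 : g.coeff n = 0 := coeff_eq_zero_of_degree_lt hg
  have e : f * (C a - C s * X) + g * (-(C u * X)) =
      f * C a - (f * C s) * X + (-(g * C u)) * X := by ring
  rw [e]
  simp [coeff_add, coeff_sub, coeff_mul_X, coeff_mul_C, h1, h2]
  ring

lemma deg_lt_step {f g : Polynomial ℂ} {n : ℕ} (t v : ℂ)
    (hf : f.degree ≤ n) (hg : g.degree < n) :
    (f * C t + g * C v).degree < ((n + 1 : ℕ) : WithBot ℕ) := by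
  have hcast : ((n : ℕ) : WithBot ℕ) < ((n + 1 : ℕ) : WithBot ℕ) := by
    exact_mod_cast Nat.lt_succ_self n
  refine lt_of_le_of_lt (degree_add_le _ _) (max_lt ?_ ?_)
  · refine lt_of_le_of_lt ((degree_mul_le _ _).trans ?_) hcast
    have h := add_le_add hf (degree_C_le : (C t : Polynomial ℂ).degree ≤ 0)
    simpa using h
  · refine lt_of_le_of_lt ((degree_mul_le _ _).trans ?_) (lt_of_lt_of_le hg hcast.le)
    have h := add_le_add (le_refl g.degree) (degree_C_le : (C v : Polynomial ℂ).degree ≤ 0)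
    simpa using h

lemma row0 (p : ℕ) (q : ℤ) (d : ℂ) (a : ℕ) (m : ℕ) :
    (pairsP p q d a m 0 0).degree ≤ (m : WithBot ℕ) ∧
    (pairsP p q d a m 0 0).coeff m = Tprod p q a m ∧
    (pairsP p q d a m 0 1).degree < (m : WithBot ℕ) := by
  induction m with
  | zero =>
      refine ⟨?_, ?_, ?_⟩ <;>
        simp [pairsP, Tprod, Matrix.one_apply, degree_one]
  | succ m ih =>
      obtain ⟨h00, hc, h01⟩ := ih
      rw [pairsP_succ, Tprod_succ]
      set M := pairsP p q d a m
      set e := eps p q (a + 2*m)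
      set f := eps p q (a + 2*m + 1)
      have e00 : (M * Pm d e f) 0 0 =
          M 0 0 * (C (d ^ e * d ^ f) - C ((e : ℂ) * (f : ℂ)) * X) +
          M 0 1 * (-(C ((f : ℂ) * (d ^ e)⁻¹) * X)) := by
        simp [Matrix.mul_apply, Fin.sum_univ_two, Pm]
      have e01 : (M * Pm d e f) 0 1 =
          M 0 0 * C ((e : ℂ) * (d ^ f)⁻¹) + M 0 1 * C ((d ^ e)⁻¹ * (d ^ f)⁻¹) := by
        simp [Matrix.mul_apply, Fin.sum_univ_two, Pm]
      refine ⟨?_, ?_, ?_⟩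
      · rw [e00]; exact deg_le_step _ _ _ h00 h01
      · rw [e00, coeff_step _ _ _ h00 h01, hc]
        simp [Ec]; ring
      · rw [e01]; exact deg_lt_step _ _ h00 h01

lemma row1 (p : ℕ) (q : ℤ) (d : ℂ) (a : ℕ) (n : ℕ) :
    (pairsP p q d a (n+1) 1 0).degree ≤ ((n+1 : ℕ) : WithBot ℕ) ∧
    (pairsP p q d a (n+1) 1 0).coeff (n+1) =
      -(Ec p q (a+1)) * (d ^ (eps p q a))⁻¹ * Tprod p q (a+2) n ∧
    (pairsP p q d a (n+1) 1 1).degree < ((n+1 : ℕ) : WithBot ℕ) := by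
  induction n with
  | zero =>
      have h1 : pairsP p q d a 1 = Pm d (eps p q a) (eps p q (a+1)) := by
        unfold pairsP
        show (List.map _ [0]).prod = _
        rw [List.map_cons, List.map_nil, List.prod_cons, List.prod_nil, mul_one]
        norm_num
      have E10 : pairsP p q d a 1 1 0 =
          -(C (((eps p q (a+1) : ℤ) : ℂ) * (d ^ (eps p q a))⁻¹) * X) := by
        rw [h1]; simp [Pm]
      have E11 : pairsP p q d a 1 1 1 =
          C ((d ^ (eps p q a))⁻¹ * (d ^ (eps p q (a+1)))⁻¹) := by
        rw [h1]; simp [Pm]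
      refine ⟨?_, ?_, ?_⟩
      · rw [E10, degree_neg]
        refine (degree_mul_le _ _).trans ?_
        have h := add_le_add
          (degree_C_le : (C (((eps p q (a+1) : ℤ) : ℂ) * (d ^ (eps p q a))⁻¹) : Polynomial ℂ).degree ≤ 0)
          (degree_X_le : (X : Polynomial ℂ).degree ≤ 1)
        simpa using h
      · rw [E10]
        simp [coeff_neg, coeff_C_mul, coeff_X_one, Tprod, Ec]
      · rw [E11]
        exact lt_of_le_of_lt degree_C_le (by exact_mod_cast Nat.zero_lt_succ 0)
  | succ n ih =>
      obtain ⟨h10, hc, h11⟩ := ih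
      rw [pairsP_succ]
      have hT : Tprod p q (a+2) (n+1) =
          Tprod p q (a+2) n * (-(Ec p q (a + 2*(n+1)) * Ec p q (a + 2*(n+1) + 1))) := by
        rw [Tprod_succ]
        have e1 : a + 2 + 2*n = a + 2*(n+1) := by ring
        rw [e1]
      set M := pairsP p q d a (n+1)
      set e := eps p q (a + 2*(n+1))
      set f := eps p q (a + 2*(n+1) + 1)
      have e10 : (M * Pm d e f) 1 0 =
          M 1 0 * (C (d ^ e * d ^ f) - C ((e : ℂ) * (f : ℂ)) * X) +
          M 1 1 * (-(C ((f : ℂ) * (d ^ e)⁻¹) * X)) := by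
        simp [Matrix.mul_apply, Fin.sum_univ_two, Pm]
      have e11 : (M * Pm d e f) 1 1 =
          M 1 0 * C ((e : ℂ) * (d ^ f)⁻¹) + M 1 1 * C ((d ^ e)⁻¹ * (d ^ f)⁻¹) := by
        simp [Matrix.mul_apply, Fin.sum_univ_two, Pm]
      refine ⟨?_, ?_, ?_⟩
      · rw [e10]; exact deg_le_step _ _ _ h10 h11
      · rw [e10, coeff_step _ _ _ h10 h11, hc, hT]
        simp [Ec]; ring
      · rw [e11]; exact deg_lt_step _ _ h10 h11

lemma pairsP_cons (p : ℕ) (q : ℤ) (d : ℂ) (a m : ℕ) :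
    pairsP p q d a (m+1) = Pm d (eps p q a) (eps p q (a+1)) * pairsP p q d (a+2) m := by
  induction m with
  | zero =>
      rw [pairsP_succ]
      have e0 : pairsP p q d a 0 = 1 := by simp [pairsP]
      have e0' : pairsP p q d (a+2) 0 = 1 := by simp [pairsP]
      rw [e0, e0', one_mul, mul_one]
      norm_num
  | succ m ih =>
      have e1 : a + 2 * (m+1) = a + 2 + 2*m := by ring
      have e2 : a + 2 * (m+1) + 1 = a + 2 + 2*m + 1 := by ring
      rw [pairsP_succ, ih, mul_assoc, e2, e1, ← pairsP_succ]

lemma negdiv (P a : ℤ) (hP : 0 < P) (h1 : -P < a) (h2 : a < 0) : a / P = -1 := by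
  have h := Int.add_mul_ediv_right a 1 (by omega : P ≠ 0)
  have h0 : (a + 1 * P) / P = 0 := Int.ediv_eq_zero_of_lt (by omega) (by omega)
  omega

lemma collect (p : ℕ) (q : ℤ) (d : ℂ) (hd : d ≠ 0) (b n : ℕ) (hb : b % 2 = 1) :
    ((List.range (2*n)).map (fun i => letter p q d (i + b))).prod = pairsP p q d b n := by
  induction n with
  | zero => simp [pairsP]
  | succ n ih =>
      have h2 : 2*(n+1) = 2*n + 1 + 1 := by ring
      rw [h2, List.range_succ, List.range_succ]
      simp only [List.map_append, List.prod_append, List.map_cons, List.prod_cons,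
        List.map_nil, List.prod_nil, mul_one]
      rw [ih, mul_assoc, pairsP_succ]
      congr 1
      have i1 : 2*n + b = b + 2*n := by omega
      have i2 : 2*n + 1 + b = b + 2*n + 1 := by omega
      rw [i1, i2, pairEq p q d hd (b + 2*n) (by omega)]

lemma coeffMulTop (f g : Polynomial ℂ) (m n : ℕ)
    (hf : f.degree ≤ m) (hg : g.degree ≤ n) :
    (f * g).coeff (m + n) = f.coeff m * g.coeff n := by
  rw [coeff_mul]
  rw [Finset.sum_eq_single ((m, n) : ℕ × ℕ)]
  · rintro ⟨i, j⟩ hij hne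
    rw [Finset.HasAntidiagonal.mem_antidiagonal] at hij
    have hne' : ¬(i = m ∧ j = n) := by
      intro hh; exact hne (by simp [hh.1, hh.2])
    rcases lt_or_ge m i with h | h
    · have : f.coeff i = 0 :=
        coeff_eq_zero_of_degree_lt (lt_of_le_of_lt hf (by exact_mod_cast h))
      simp [this]
    · have hj : n < j := by omega
      have : g.coeff j = 0 :=
        coeff_eq_zero_of_degree_lt (lt_of_le_of_lt hg (by exact_mod_cast hj))
      simp [this]
  · intro hmem
    exact absurd (by simp : ((m, n) : ℕ × ℕ) ∈ Finset.HasAntidiagonal.antidiagonal (m + n)) hmem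

lemma deg_le_of_lt_succ {f : Polynomial ℂ} {n : ℕ}
    (h : f.degree < ((n+1 : ℕ) : WithBot ℕ)) : f.degree ≤ (n : WithBot ℕ) := by
  rw [degree_le_iff_coeff_zero]
  intro m hm
  have hm' : n < m := by exact_mod_cast hm
  exact coeff_eq_zero_of_degree_lt (lt_of_lt_of_le h (by exact_mod_cast hm'))

lemma deg_lt_of_coeff0 {f : Polynomial ℂ} {n : ℕ}
    (h1 : f.degree ≤ (n : WithBot ℕ)) (h2 : f.coeff n = 0) :
    f.degree < (n : WithBot ℕ) :=
  lt_of_le_of_ne h1 (fun he => (coeff_ne_zero_of_eq_degree he) h2)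

lemma factAB (p : ℕ) (q : ℤ) (k : ℕ) (hp3 : 3 ≤ p) (hpodd : Odd p) (hq : Odd q)
    (hql : -(p : ℤ) < q) (hqu : q < (p : ℤ)) (hq1 : q ≠ 1) (hq1' : q ≠ -1)
    (hk0 : 0 < k) (hkp : k < p) (hkodd : Odd k)
    (hk : (k : ℤ) * q ≡ 1 [ZMOD (2 * p)] ∨ (k : ℤ) * q ≡ -1 [ZMOD (2 * p)]) :
    3 ≤ k ∧ eps p q (k-1) = -(eps p q (k+1)) := by
  obtain ⟨t, ht⟩ := hq
  obtain ⟨u, hu⟩ := hpodd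
  obtain ⟨v, hv⟩ := hkodd
  have hp0 : (0:ℤ) < (p:ℤ) := by exact_mod_cast (by omega : 0 < p)
  -- extract δ and m
  have key : ∃ δ m : ℤ, (δ = 1 ∨ δ = -1) ∧ (k : ℤ) * q = 2 * (p:ℤ) * m + δ := by
    rcases hk with h | h
    · obtain ⟨m, hm⟩ := (Int.ModEq.dvd h)
      exact ⟨1, -m, Or.inl rfl, by push_cast at hm ⊢; linarith⟩
    · obtain ⟨m, hm⟩ := (Int.ModEq.dvd h)
      exact ⟨-1, -m, Or.inr rfl, by push_cast at hm ⊢; linarith⟩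
  obtain ⟨δ, m, hδ, hm⟩ := key
  -- k ≥ 3
  have hk3 : 3 ≤ k := by
    by_contra hcon
    have hk1 : k = 1 := by omega
    rw [hk1] at hm
    push_cast at hm
    rcases lt_trichotomy m 0 with h | h | h
    · have h1 : m ≤ -1 := by omega
      have : 2 * (p:ℤ) * m ≤ 2 * (p:ℤ) * (-1) := by
        apply mul_le_mul_of_nonneg_left h1 (by positivity)
      omega
    · rw [h] at hm; omega
    · have h1 : 1 ≤ m := by omega
      have : 2 * (p:ℤ) * 1 ≤ 2 * (p:ℤ) * m := by
        apply mul_le_mul_of_nonneg_left h1 (by positivity)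
      omega
  -- divisor computations
  have c1 : ((k+1 : ℕ) : ℤ) * q = (δ + q) + (2*m) * (p:ℤ) := by
    push_cast; linear_combination hm
  have c2 : ((k-1 : ℕ) : ℤ) * q = (δ - q) + (2*m) * (p:ℤ) := by
    push_cast [Nat.cast_sub (by omega : 1 ≤ k)]
    linear_combination hm
  have f1 : (((k+1 : ℕ) : ℤ) * q).fdiv (p:ℤ) = (δ + q) / (p:ℤ) + 2*m := by
    rw [Int.fdiv_eq_ediv_of_nonneg _ hp0.le, c1, Int.add_mul_ediv_right _ _ (ne_of_gt hp0)]
  have f2 : (((k-1 : ℕ) : ℤ) * q).fdiv (p:ℤ) = (δ - q) / (p:ℤ) + 2*m := by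
    rw [Int.fdiv_eq_ediv_of_nonneg _ hp0.le, c2, Int.add_mul_ediv_right _ _ (ne_of_gt hp0)]
  have hqb : (3 ≤ q ∧ q ≤ (p:ℤ) - 2) ∨ (q ≤ -3 ∧ -(p:ℤ) + 2 ≤ q) := by omega
  have hdvals : ((δ + q) / (p:ℤ) = 0 ∧ (δ - q) / (p:ℤ) = -1) ∨
      ((δ + q) / (p:ℤ) = -1 ∧ (δ - q) / (p:ℤ) = 0) := by
    rcases hqb with ⟨h1, h2⟩ | ⟨h1, h2⟩
    · left
      constructor
      · exact Int.ediv_eq_zero_of_lt (by omega) (by omega)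
      · exact negdiv _ _ hp0 (by omega) (by omega)
    · right
      constructor
      · exact negdiv _ _ hp0 (by omega) (by omega)
      · exact Int.ediv_eq_zero_of_lt (by omega) (by omega)
  refine ⟨hk3, ?_⟩
  unfold eps
  rcases hdvals with ⟨e1, e2⟩ | ⟨e1, e2⟩ <;>
    rw [f1, f2, e1, e2] <;> split_ifs with h1 h2 <;> omega

end TwoBridgeAux

open TwoBridgeAux in
set_option maxHeartbeats 1000000 in
theorem stmt_11' (p : ℕ) (q : ℤ) (hp : Odd p) (hq : Odd q)
    (hpq : IsCoprime (p : ℤ) q) (hp3 : 3 ≤ p)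
    (hql : -(p : ℤ) < q) (hqu : q < (p : ℤ))
    (hq1 : q ≠ 1) (hq1' : q ≠ -1)
    (d : ℂ) (hd : d ≠ 0)
    (k : ℕ) (hk0 : 0 < k) (hkp : k < p) (hkodd : Odd k)
    (hk : (k : ℤ) * q ≡ 1 [ZMOD (2 * p)] ∨ (k : ℤ) * q ≡ -1 [ZMOD (2 * p)]) :
    ∃ s : ℤ, (s = 1 ∨ s = -1) ∧
      ∃ h : Polynomial ℂ, h.degree < (((p - 1) / 2 - 1 : ℕ) : WithBot ℕ) ∧
        (((List.range (p - k)).map (fun i => letter p q d (i + k))).prod 1 0 -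
            C (d - d⁻¹) * ((List.range (p - k)).map (fun i => letter p q d (i + k))).prod 1 1) *
            (((List.range (k - 1)).map (fun i => letter p q d (i + 1))).prod 0 0 -
              C (d - d⁻¹) * ((List.range (k - 1)).map (fun i => letter p q d (i + 1))).prod 0 1) =
          C ((s : ℂ) * d ^ (-eps p q k)) *
            (((List.range (p - 1)).map (fun i => letter p q d (i + 1))).prod 0 0 -
              C (d - d⁻¹) * ((List.range (p - 1)).map (fun i => letter p q d (i + 1))).prod 0 1) + h := by
  obtain ⟨hk3, hepsA⟩ := factAB p q k hp3 hp hq hql hqu hq1 hq1' hk0 hkp hkodd hk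
  obtain ⟨uu, huu⟩ := hp
  obtain ⟨vv, hvv⟩ := hkodd
  obtain ⟨n1, hn1⟩ : ∃ n1, k - 1 = 2*(n1+1) := ⟨vv - 1, by omega⟩
  obtain ⟨n2, hn2⟩ : ∃ n2, p - k = 2*(n2+1) := ⟨uu - vv - 1, by omega⟩
  set V := pairsP p q d 1 (n1+1) with hVdef
  set Mm := pairsP p q d (k+2) n2 with hMdef
  set Y := pairsP p q d k (n2+1) with hYdef
  set dd := d - d⁻¹ with hdd
  set ec : ℂ := ((eps p q k : ℤ) : ℂ) with hec
  set fc : ℂ := ((eps p q (k+1) : ℤ) : ℂ) with hfc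
  set gc : ℂ := ((eps p q (k-2) : ℤ) : ℂ) with hgc
  set de : ℂ := d ^ (eps p q k) with hde
  set df : ℂ := d ^ (eps p q (k+1)) with hdf
  set dh : ℂ := d ^ (eps p q (k-1)) with hdh
  have hde0 : de ≠ 0 := zpow_ne_zero _ hd
  have hdf0 : df ≠ 0 := zpow_ne_zero _ hd
  -- conversion of the letter products to pair products
  have hVeq : ((List.range (k - 1)).map (fun i => letter p q d (i + 1))).prod = V := by
    rw [hn1]; exact collect p q d hd 1 (n1+1) (by omega)
  have hYeq : ((List.range (p - k)).map (fun i => letter p q d (i + k))).prod = Y := by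
    rw [hn2]; exact collect p q d hd k (n2+1) (by omega)
  have hWVY : ((List.range (p - 1)).map (fun i => letter p q d (i + 1))).prod = V * Y := by
    have hsplit : p - 1 = (k-1) + (p-k) := by omega
    rw [hsplit, List.range_add, List.map_append, List.prod_append, hVeq]
    rw [List.map_map, ← hYeq]
    congr 1
    congr 1
    apply List.map_congr_left
    intro i hi
    simp only [Function.comp_apply]
    have e : k - 1 + i + 1 = i + k := by omega
    rw [e]
  -- splittings
  have i1 : 1 + 2*n1 = k - 2 := by omega
  have i2 : 1 + 2*n1 + 1 = k - 1 := by omega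
  have hVsplit : V = pairsP p q d 1 n1 * Pm d (eps p q (k-2)) (eps p q (k-1)) := by
    rw [hVdef, pairsP_succ, i2, i1]
  have hYsplit : Y = Pm d (eps p q k) (eps p q (k+1)) * Mm := by
    rw [hYdef, hMdef, pairsP_cons]
  -- invariants
  obtain ⟨hV00d, hV00c, hV01d⟩ := row0 p q d 1 (n1+1)
  obtain ⟨hVp00d, hVp00c, hVp01d⟩ := row0 p q d 1 n1
  obtain ⟨hM00d, hM00c, hM01d⟩ := row0 p q d (k+2) n2
  obtain ⟨hY10d, hY10c, hY11d⟩ := row1 p q d k n2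
  rw [← hVdef] at hV00d hV00c hV01d
  rw [← hMdef] at hM00d hM00c hM01d
  rw [← hYdef] at hY10d hY10c hY11d
  -- the candidate h
  set Ψ : Polynomial ℂ := Y 1 0 - C dd * Y 1 1 with hΨ
  set φV : Polynomial ℂ := V 0 0 - C dd * V 0 1 with hφV
  set φM : Polynomial ℂ := Mm 0 0 - C dd * Mm 0 1 with hφM
  set φW : Polynomial ℂ := (V * Y) 0 0 - C dd * (V * Y) 0 1 with hφW
  set hpoly : Polynomial ℂ := Ψ * φV - C (ec * de⁻¹) * φW with hhp
  refine ⟨eps p q k, eps_cases p q k, hpoly, ?_, ?_⟩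
  swap
  · -- the equation
    rw [hYeq, hVeq, hWVY, _root_.zpow_neg, ← hde, ← hΨ, ← hφV, ← hφW, hhp]
    ring
  -- the degree bound
  -- φW in terms of V and Y entries
  have w00 : (V * Y) 0 0 = V 0 0 * Y 0 0 + V 0 1 * Y 1 0 := by
    simp [Matrix.mul_apply, Fin.sum_univ_two]
  have w01 : (V * Y) 0 1 = V 0 0 * Y 0 1 + V 0 1 * Y 1 1 := by
    simp [Matrix.mul_apply, Fin.sum_univ_two]
  have hphiW : φW = V 0 0 * (Y 0 0 - C dd * Y 0 1) + V 0 1 * Ψ := by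
    rw [hφW, w00, w01, hΨ]; ring
  -- entries of Y in terms of Mm
  have eY00 : Y 0 0 = (C (de * df) - C (ec * fc) * X) * Mm 0 0 + C (ec * df⁻¹) * Mm 1 0 := by
    rw [hYsplit]
    simp [Matrix.mul_apply, Fin.sum_univ_two, Pm, ← hde, ← hdf, ← hec, ← hfc, _root_.zpow_neg]
    try ring
  have eY01 : Y 0 1 = (C (de * df) - C (ec * fc) * X) * Mm 0 1 + C (ec * df⁻¹) * Mm 1 1 := by
    rw [hYsplit]
    simp [Matrix.mul_apply, Fin.sum_univ_two, Pm, ← hde, ← hdf, ← hec, ← hfc, _root_.zpow_neg]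
    try ring
  have eY10 : Y 1 0 = -(C (fc * de⁻¹) * X) * Mm 0 0 + C (de⁻¹ * df⁻¹) * Mm 1 0 := by
    rw [hYsplit]
    simp [Matrix.mul_apply, Fin.sum_univ_two, Pm, ← hde, ← hdf, ← hec, ← hfc, _root_.zpow_neg]
    try ring
  have eY11 : Y 1 1 = -(C (fc * de⁻¹) * X) * Mm 0 1 + C (de⁻¹ * df⁻¹) * Mm 1 1 := by
    rw [hYsplit]
    simp [Matrix.mul_apply, Fin.sum_univ_two, Pm, ← hde, ← hdf, ← hec, ← hfc, _root_.zpow_neg]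
    try ring
  have hecC : (C ec * C ec : Polynomial ℂ) = 1 := by
    rw [← C_mul]
    rcases eps_cases p q k with h | h <;> simp [hec, h]
  have hdeiC : (C de * C de⁻¹ : Polynomial ℂ) = 1 := by
    rw [← C_mul, mul_inv_cancel₀ hde0, C_1]
  have h2 : Ψ - C (ec * de⁻¹) * (Y 0 0 - C dd * Y 0 1) = -(C ec * C df * φM) := by
    rw [hΨ, eY00, eY01, eY10, eY11, hφM]
    simp only [C_mul]
    linear_combination (Mm 0 0 - C dd * Mm 0 1) * (C de⁻¹ * C fc * X * hecC - C ec * C df * hdeiC)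
      + (Mm 1 0 - C dd * Mm 1 1) * (-(C de⁻¹ * C df⁻¹) * hecC)
  have h3 : (C dd + C (ec * de⁻¹) : Polynomial ℂ) = C (ec * de) := by
    rw [← C_add]
    congr 1
    have hz : d ^ (-1 : ℤ) = d⁻¹ := by rw [_root_.zpow_neg, zpow_one]
    rcases eps_cases p q k with h | h <;>
        simp only [hdd, hec, hde, h, zpow_one, hz, Int.cast_one, Int.cast_neg, inv_inv] <;>
      ring
  have hmain : hpoly = -(C ec * C df * (V 0 0 * φM)) - C (ec * de) * (V 0 1 * Ψ) := by
    rw [hhp, hphiW, hφV]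
    linear_combination (V 0 0) * h2 - (V 0 1) * Ψ * h3
  -- degree bounds
  have hφMd : φM.degree ≤ (n2 : WithBot ℕ) := by
    rw [hφM]
    refine (degree_sub_le _ _).trans (max_le hM00d ?_)
    refine (degree_mul_le _ _).trans ?_
    have h := add_le_add (degree_C_le : (C dd : Polynomial ℂ).degree ≤ 0) (le_of_lt hM01d)
    simpa using h
  have hφMc : φM.coeff n2 = Tprod p q (k+2) n2 := by
    rw [hφM, coeff_sub, hM00c, coeff_C_mul, coeff_eq_zero_of_degree_lt hM01d]
    ring
  have hΨd : Ψ.degree ≤ ((n2+1 : ℕ) : WithBot ℕ) := by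
    rw [hΨ]
    refine (degree_sub_le _ _).trans (max_le hY10d ?_)
    refine (degree_mul_le _ _).trans ?_
    have h := add_le_add (degree_C_le : (C dd : Polynomial ℂ).degree ≤ 0) (le_of_lt hY11d)
    simpa using h
  have hΨc : Ψ.coeff (n2+1) = -fc * de⁻¹ * Tprod p q (k+2) n2 := by
    rw [hΨ, coeff_sub, hY10c, coeff_C_mul, coeff_eq_zero_of_degree_lt hY11d]
    simp only [Ec, ← hfc, ← hde, mul_zero, sub_zero]
  have hV01le : (V 0 1).degree ≤ (n1 : WithBot ℕ) := deg_le_of_lt_succ hV01d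
  have hV01c : (V 0 1).coeff n1 = Tprod p q 1 n1 * (gc * dh⁻¹) := by
    rw [hVsplit]
    have eV : (pairsP p q d 1 n1 * Pm d (eps p q (k-2)) (eps p q (k-1))) 0 1 =
        pairsP p q d 1 n1 0 0 * C (gc * dh⁻¹) +
        pairsP p q d 1 n1 0 1 * C ((d ^ eps p q (k-2))⁻¹ * (d ^ eps p q (k-1))⁻¹) := by
      simp [Matrix.mul_apply, Fin.sum_univ_two, Pm, ← hgc, ← hdh, _root_.zpow_neg]
      try ring
    rw [eV, coeff_add, coeff_mul_C, coeff_mul_C, hVp00c, coeff_eq_zero_of_degree_lt hVp01d]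
    ring
  have cast1 : ((n1+1 : ℕ) : WithBot ℕ) + ((n2 : ℕ) : WithBot ℕ) = ((n1+1+n2 : ℕ) : WithBot ℕ) := by
    rw [← Nat.cast_add]
  have t1d : (C ec * C df * (V 0 0 * φM)).degree ≤ ((n1+1+n2 : ℕ) : WithBot ℕ) := by
    refine (degree_mul_le _ _).trans ?_
    have hA : (C ec * C df : Polynomial ℂ).degree ≤ 0 := by
      rw [← C_mul]; exact degree_C_le
    have hB : (V 0 0 * φM).degree ≤ ((n1+1+n2 : ℕ) : WithBot ℕ) := by
      refine (degree_mul_le _ _).trans ?_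
      rw [← cast1]
      exact add_le_add hV00d hφMd
    calc (C ec * C df : Polynomial ℂ).degree + (V 0 0 * φM).degree
        ≤ 0 + ((n1+1+n2 : ℕ) : WithBot ℕ) := add_le_add hA hB
      _ = _ := zero_add _
  have cast2 : ((n1 : ℕ) : WithBot ℕ) + ((n2+1 : ℕ) : WithBot ℕ) = ((n1+1+n2 : ℕ) : WithBot ℕ) := by
    rw [← Nat.cast_add]
    congr 1
    omega
  have t2d : (C (ec * de) * (V 0 1 * Ψ)).degree ≤ ((n1+1+n2 : ℕ) : WithBot ℕ) := by
    refine (degree_mul_le _ _).trans ?_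
    have hB : (V 0 1 * Ψ).degree ≤ ((n1+1+n2 : ℕ) : WithBot ℕ) := by
      refine (degree_mul_le _ _).trans ?_
      rw [← cast2]
      exact add_le_add hV01le hΨd
    calc (C (ec * de) : Polynomial ℂ).degree + (V 0 1 * Ψ).degree
        ≤ 0 + ((n1+1+n2 : ℕ) : WithBot ℕ) := add_le_add degree_C_le hB
      _ = _ := zero_add _
  have hdeg : hpoly.degree ≤ ((n1+1+n2 : ℕ) : WithBot ℕ) := by
    rw [hmain]
    refine (degree_sub_le _ _).trans (max_le ?_ t2d)
    rw [degree_neg]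
    exact t1d
  have hco : hpoly.coeff (n1+1+n2) = 0 := by
    rw [hmain, coeff_sub, coeff_neg]
    rw [show (C ec * C df * (V 0 0 * φM) : Polynomial ℂ) = C (ec * df) * (V 0 0 * φM) by
      rw [C_mul]]
    rw [coeff_C_mul, coeff_C_mul]
    have c1 := coeffMulTop (V 0 0) φM (n1+1) n2 hV00d hφMd
    rw [hV00c, hφMc] at c1
    have c2 := coeffMulTop (V 0 1) Ψ n1 (n2+1) hV01le hΨd
    rw [hV01c, hΨc] at c2
    have e : n1 + (n2+1) = n1+1+n2 := by omega
    rw [e] at c2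
    rw [c1, c2]
    have hTsucc : Tprod p q 1 (n1+1) =
        Tprod p q 1 n1 * (-(gc * ((eps p q (k-1) : ℤ) : ℂ))) := by
      rw [Tprod_succ, i2, i1]
      simp only [Ec, ← hgc]
    have hcast : ((eps p q (k-1) : ℤ) : ℂ) = -fc := by
      rw [hepsA, Int.cast_neg, ← hfc]
    have hdh2 : dh⁻¹ = df := by
      rw [hdh, hdf, hepsA, _root_.zpow_neg, inv_inv]
    rw [hTsucc, hcast, hdh2]
    have hinv : de * de⁻¹ = 1 := mul_inv_cancel₀ hde0
    linear_combination (ec * df * Tprod p q 1 n1 * gc * fc * Tprod p q (k+2) n2) * hinv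
  have hfin : hpoly.degree < ((n1+1+n2 : ℕ) : WithBot ℕ) := deg_lt_of_coeff0 hdeg hco
  have hcast3 : ((p-1)/2 - 1 : ℕ) = n1+1+n2 := by omega
  rw [hcast3]
  exact hfin


theorem stmt_11 (p : ℕ) (q : ℤ) (hp : Odd p) (hq : Odd q)
    (hpq : IsCoprime (p : ℤ) q) (hp3 : 3 ≤ p)
    (hql : -(p : ℤ) < q) (hqu : q < (p : ℤ))
    (hq1 : q ≠ 1) (hq1' : q ≠ -1)
    (d : ℂ) (hd : d ≠ 0)
    (k : ℕ) (hk0 : 0 < k) (hkp : k < p) (hkodd : Odd k)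
    (hk : (k : ℤ) * q ≡ 1 [ZMOD (2 * p)] ∨ (k : ℤ) * q ≡ -1 [ZMOD (2 * p)]) :
    ∃ s : ℤ, (s = 1 ∨ s = -1) ∧
      ∃ h : Polynomial ℂ, h.degree < (((p - 1) / 2 - 1 : ℕ) : WithBot ℕ) ∧
        (twoBridgeY p q d k 1 0 - C (d - d⁻¹) * twoBridgeY p q d k 1 1) *
            phi d (twoBridgeV p q d k) =
          C ((s : ℂ) * d ^ (-eps p q k)) * phi d (twoBridgeW p q d) + h := by
  have H := stmt_11' p q hp hq hpq hp3 hql hqu hq1 hq1' d hd k hk0 hkp hkodd hk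
  unfold twoBridgeY twoBridgeV twoBridgeW phi
  exact H
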